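/- Let t1, t2 : ℕ → ℝ satisfy t1(m) ≠ 0 and t2(m) ≠ 0 for all m ≥ 1, and suppose there exist M ≥ 1 and nonzero reals t1∞, t2∞ with |t1∞| ≥ |t2∞| such that t1(m) = t1∞ and t2(m) = t2∞ for all m ≥ M. If ψ : ℕ → ℂ² satisfies ψ_0 = 0, ∑_{m≥1} ‖ψ_m‖² < ∞, and A(m−1)ᵀ ψ_{m−1} + V(m) ψ_m + A(m) ψ_{m+1} = 0 for all m ≥ 1, then ψ_m = 0 for all m. In particular, 0 is not an eigenvalue of the SSH edge Hamiltonian in this case. -/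
import Mathlib


open Matrix in
/-- Nonexistence of a zero-energy edge state of the SSH edge Hamiltonian (with zero onsite
potentials) when `|t1∞| ≥ |t2∞|`: any square-summable solution of
`A(m-1)ᵀ ψ_{m-1} + V(m) ψ_m + A(m) ψ_{m+1} = 0` (for all `m ≥ 1`) with `ψ_0 = 0` vanishes. -/
theorem stmt_3 (t1 t2 : ℕ → ℝ)
    (h1 : ∀ m, 1 ≤ m → t1 m ≠ 0) (h2 : ∀ m, 1 ≤ m → t2 m ≠ 0)
    (M : ℕ) (hM : 1 ≤ M) (t1i t2i : ℝ) (ht1 : t1i ≠ 0) (ht2 : t2i ≠ 0)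
    (hge : |t2i| ≤ |t1i|)
    (he1 : ∀ m, M ≤ m → t1 m = t1i) (he2 : ∀ m, M ≤ m → t2 m = t2i)
    (ψ : ℕ → Fin 2 → ℂ)
    (hψ0 : ψ 0 = 0)
    (hsum : Summable (fun m : ℕ => ‖ψ m 0‖ ^ 2 + ‖ψ m 1‖ ^ 2))
    (heq : ∀ m, 1 ≤ m →
      (!![(0 : ℂ), 0; (t2 (m - 1) : ℂ), 0])ᵀ.mulVec (ψ (m - 1)) +
        (!![(0 : ℂ), (t1 m : ℂ); (t1 m : ℂ), 0]).mulVec (ψ m) +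
        (!![(0 : ℂ), 0; (t2 m : ℂ), 0]).mulVec (ψ (m + 1)) = 0) :
    ∀ m, ψ m = 0 := by
  have key : ∀ m, 1 ≤ m → ((t2 (m-1) : ℂ) * ψ (m-1) 1 + (t1 m : ℂ) * ψ m 1 = 0 ∧
      (t1 m : ℂ) * ψ m 0 + (t2 m : ℂ) * ψ (m+1) 0 = 0) := by
    intro m hm
    have h := heq m hm
    rw [show (!![(0:ℂ),0;(t2 (m-1):ℂ),0])ᵀ = !![(0:ℂ),(t2 (m-1):ℂ);0,0] from by
      ext i j; fin_cases i <;> fin_cases j <;> simp] at h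
    have h0 := congrFun h 0
    have h1 := congrFun h 1
    simp [Matrix.mulVec, dotProduct, Fin.sum_univ_two] at h0 h1
    exact ⟨h0, h1⟩
  -- second component vanishes
  have hc1 : ∀ m, ψ m 1 = 0 := by
    intro m
    induction m with
    | zero => simp [hψ0]
    | succ n ih =>
      have e := (key (n+1) (by omega)).1
      simp only [Nat.add_sub_cancel] at e
      rw [ih, mul_zero, zero_add] at e
      have ht : (t1 (n+1) : ℂ) ≠ 0 := by
        exact_mod_cast h1 (n+1) (by omega)
      exact (mul_eq_zero.mp e).resolve_left ht
  -- first component: summability and monotonicity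
  have hs0 : Summable (fun m : ℕ => ‖ψ m 0‖ ^ 2) :=
    hsum.of_nonneg_of_le (fun m => by positivity)
      (fun m => le_add_of_nonneg_right (by positivity))
  have htend2 := hs0.tendsto_atTop_zero
  have htend : Filter.Tendsto (fun m => ‖ψ m 0‖) Filter.atTop (nhds 0) := by
    have := htend2.sqrt
    simpa [Real.sqrt_sq (norm_nonneg _)] using this
  have hmono : ∀ m, M ≤ m → ‖ψ m 0‖ ≤ ‖ψ (m+1) 0‖ := by
    intro m hm
    have e := (key m (le_trans hM hm)).2
    rw [he1 m hm, he2 m hm] at e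
    have e2 : (t1i : ℂ) * ψ m 0 = -((t2i : ℂ) * ψ (m+1) 0) :=
      eq_neg_of_add_eq_zero_left e
    have e3 : |t1i| * ‖ψ m 0‖ = |t2i| * ‖ψ (m+1) 0‖ := by
      have := congrArg norm e2
      simpa [norm_mul, Complex.norm_real, Real.norm_eq_abs] using this
    have hp : 0 < |t1i| := abs_pos.mpr ht1
    nlinarith [norm_nonneg (ψ (m+1) 0), norm_nonneg (ψ m 0)]
  have hle : ∀ k, M ≤ k → ∀ n, k ≤ n → ‖ψ k 0‖ ≤ ‖ψ n 0‖ := by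
    intro k hk n hn
    induction n, hn using Nat.le_induction with
    | base => exact le_rfl
    | succ n hn ih => exact le_trans ih (hmono n (le_trans hk hn))
  have hzM : ∀ k, M ≤ k → ψ k 0 = 0 := by
    intro k hk
    have hle0 : ‖ψ k 0‖ ≤ 0 := by
      refine ge_of_tendsto htend ?_
      exact Filter.eventually_atTop.mpr ⟨k, fun n hn => hle k hk n hn⟩
    exact norm_eq_zero.mp (le_antisymm hle0 (norm_nonneg _))
  -- backward induction below M
  have hback : ∀ d, ψ (M - d) 0 = 0 := by
    intro d
    induction d with
    | zero => exact hzM M le_rfl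
    | succ n ih =>
      rcases Nat.eq_zero_or_pos (M - (n+1)) with h | h
      · rw [h, hψ0]; rfl
      · set m := M - (n+1) with hm
        have hm1 : m + 1 = M - n := by omega
        have e := (key m h).2
        rw [hm1, ih, mul_zero, add_zero] at e
        have ht : (t1 m : ℂ) ≠ 0 := by exact_mod_cast h1 m h
        exact (mul_eq_zero.mp e).resolve_left ht
  have hc0 : ∀ m, ψ m 0 = 0 := by
    intro m
    rcases le_or_gt M m with h | h
    · exact hzM m h
    · have : m = M - (M - m) := by omega
      rw [this]; exact hback (M - m)
  intro m
  funext i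
  fin_cases i
  · simpa using hc0 m
  · simpa using hc1 m
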